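/- (The Schrödinger representation of the Heisenberg group: Weyl relations.) Let d ≥ 1 and ℏ > 0. For (q,p,λ) ∈ ℝ^d × ℝ^d × ℝ define the operator ρ(q,p,λ) on L²(ℝ^d) by (ρ(q,p,λ)ψ)(x) := e^{(i/ℏ)(λ + p·(x − q/2))} ψ(x − q). Then: (a) each ρ(q,p,λ) is a surjective linear isometry (unitary operator) of L²(ℝ^d); (b) for all (q,p,λ), (q′,p′,λ′): ρ(q,p,λ) ∘ ρ(q′,p′,λ′) = ρ(q+q′, p+p′, λ+λ′+(1/2)(p·q′ − q·p′)); i.e. ρ is a unitary representation of the Heisenberg group H(ℝ^d). -/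

import Mathlib

noncomputable section

open MeasureTheory

/-- The Heisenberg group multiplication on `ℝ^d × ℝ^d × ℝ`:
`(q,p,λ)(q′,p′,λ′) = (q+q′, p+p′, λ+λ′+(1/2)(p·q′ − q·p′))`. -/
def heisMul (d : ℕ) (g g' : (Fin d → ℝ) × (Fin d → ℝ) × ℝ) :
    (Fin d → ℝ) × (Fin d → ℝ) × ℝ :=
  (g.1 + g'.1, g.2.1 + g'.2.1,
    g.2.2 + g'.2.2 + (1 / 2) * ((∑ j, g.2.1 j * g'.1 j) - ∑ j, g.1 j * g'.2.1 j))

namespace SchrodingerRep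

variable {d : ℕ} (ℏ : ℝ)

/-- The phase factor. -/
def ph (g : (Fin d → ℝ) × (Fin d → ℝ) × ℝ) (x : Fin d → ℝ) : ℂ :=
  Complex.exp ((Complex.I / (ℏ : ℂ)) *
    (((g.2.2 + ∑ j, g.2.1 j * (x j - g.1 j / 2) : ℝ)) : ℂ))

lemma norm_ph (g : (Fin d → ℝ) × (Fin d → ℝ) × ℝ) (x : Fin d → ℝ) : ‖ph ℏ g x‖ = 1 := by
  rw [ph, Complex.norm_exp]
  have : ((Complex.I / (ℏ : ℂ)) *
      (((g.2.2 + ∑ j, g.2.1 j * (x j - g.1 j / 2) : ℝ)) : ℂ)).re = 0 := by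
    simp [Complex.div_re, Complex.mul_re, Complex.ofReal_re, Complex.ofReal_im]
  rw [this, Real.exp_zero]

lemma continuous_ph (g : (Fin d → ℝ) × (Fin d → ℝ) × ℝ) : Continuous (ph ℏ g) := by
  apply Complex.continuous_exp.comp
  apply Continuous.mul continuous_const
  apply Complex.continuous_ofReal.comp
  exact continuous_const.add (continuous_finset_sum _ fun j _ =>
    (continuous_const.mul ((continuous_apply j).sub continuous_const)))

/-- Pointwise action. -/
def Tf (g : (Fin d → ℝ) × (Fin d → ℝ) × ℝ) (f : (Fin d → ℝ) → ℂ) : (Fin d → ℝ) → ℂ :=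
  fun x => ph ℏ g x * f (x - g.1)

lemma Tf_comp (g g' : (Fin d → ℝ) × (Fin d → ℝ) × ℝ) (f : (Fin d → ℝ) → ℂ) :
    Tf ℏ g (Tf ℏ g' f) = Tf ℏ (heisMul d g g') f := by
  funext x
  simp only [Tf, ph, heisMul, ← mul_assoc, ← Complex.exp_add, ← mul_add]
  have harg : ((g.2.2 + ∑ j, g.2.1 j * (x j - g.1 j / 2) : ℝ) : ℂ) +
      ((g'.2.2 + ∑ j, g'.2.1 j * ((x - g.1) j - g'.1 j / 2) : ℝ) : ℂ) =
      ((g.2.2 + g'.2.2 + 1 / 2 * ((∑ j, g.2.1 j * g'.1 j) - ∑ j, g.1 j * g'.2.1 j) +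
        ∑ j, (g.2.1 + g'.2.1) j * (x j - (g.1 + g'.1) j / 2) : ℝ) : ℂ) := by
    rw [← Complex.ofReal_add]
    congr 1
    have hsum : ∑ j, (g.2.1 + g'.2.1) j * (x j - (g.1 + g'.1) j / 2) =
        ∑ j, (g.2.1 j * (x j - g.1 j / 2) + g'.2.1 j * ((x - g.1) j - g'.1 j / 2)
          - 1 / 2 * (g.2.1 j * g'.1 j - g.1 j * g'.2.1 j)) :=
      Finset.sum_congr rfl fun j _ => by simp only [Pi.add_apply, Pi.sub_apply]; ring
    rw [hsum, Finset.sum_sub_distrib, Finset.sum_add_distrib, ← Finset.mul_sum,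
      Finset.sum_sub_distrib]
    ring
  rw [harg, sub_sub]

end SchrodingerRep

namespace SchrodingerRep

variable {d : ℕ} (ℏ : ℝ)

local notation "μ" => (volume : Measure (Fin d → ℝ))

lemma Tf_congr (g : (Fin d → ℝ) × (Fin d → ℝ) × ℝ) {f f' : (Fin d → ℝ) → ℂ}
    (h : f =ᵐ[μ] f') : Tf ℏ g f =ᵐ[μ] Tf ℏ g f' := by
  have := ((measurePreserving_sub_right μ g.1).quasiMeasurePreserving.ae_eq h)
  filter_upwards [this] with x hx
  simp only [Tf, Function.comp] at hx ⊢
  rw [show f (x - g.1) = f' (x - g.1) from hx]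

lemma memT (g : (Fin d → ℝ) × (Fin d → ℝ) × ℝ) {f : (Fin d → ℝ) → ℂ}
    (hf : MemLp f 2 μ) : MemLp (Tf ℏ g f) 2 μ := by
  have h1 : MemLp (fun x => f (x - g.1)) 2 μ :=
    hf.comp_measurePreserving (measurePreserving_sub_right μ g.1)
  refine h1.of_le ?_ ?_
  · exact ((continuous_ph ℏ g).aestronglyMeasurable).mul h1.1
  · refine Filter.Eventually.of_forall fun x => ?_
    simp only [Tf, norm_mul, norm_ph, one_mul, le_refl]

/-- The operator on `L²`. -/
def T (g : (Fin d → ℝ) × (Fin d → ℝ) × ℝ) (ψ : Lp ℂ 2 μ) : Lp ℂ 2 μ :=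
  (memT ℏ g (Lp.memLp ψ)).toLp _

lemma coe_T (g : (Fin d → ℝ) × (Fin d → ℝ) × ℝ) (ψ : Lp ℂ 2 μ) :
    (T ℏ g ψ : (Fin d → ℝ) → ℂ) =ᵐ[μ] Tf ℏ g (ψ : (Fin d → ℝ) → ℂ) :=
  MemLp.coeFn_toLp _

lemma T_comp (g g' : (Fin d → ℝ) × (Fin d → ℝ) × ℝ) (ψ : Lp ℂ 2 μ) :
    T ℏ g (T ℏ g' ψ) = T ℏ (heisMul d g g') ψ := by
  apply Lp.ext
  refine (coe_T ℏ g _).trans ?_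
  refine (Tf_congr ℏ g (coe_T ℏ g' ψ)).trans ?_
  rw [Tf_comp]
  exact (coe_T ℏ (heisMul d g g') ψ).symm

lemma T_id (ψ : Lp ℂ 2 μ) : T ℏ (0, 0, 0) ψ = ψ := by
  apply Lp.ext
  refine (coe_T ℏ _ ψ).trans ?_
  have : Tf ℏ ((0 : Fin d → ℝ), (0 : Fin d → ℝ), (0 : ℝ)) (ψ : (Fin d → ℝ) → ℂ) =
      (ψ : (Fin d → ℝ) → ℂ) := by
    funext x
    simp [Tf, ph]
  rw [this]

/-- The inverse element. -/
def ginv (g : (Fin d → ℝ) × (Fin d → ℝ) × ℝ) : (Fin d → ℝ) × (Fin d → ℝ) × ℝ :=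
  (-g.1, -g.2.1, -g.2.2)

lemma ginv_mul (g : (Fin d → ℝ) × (Fin d → ℝ) × ℝ) : heisMul d (ginv g) g = (0, 0, 0) := by
  simp only [heisMul, ginv, Prod.mk.injEq]
  refine ⟨by abel, by abel, ?_⟩
  have h : ∑ j, g.1 j * g.2.1 j = ∑ j, g.2.1 j * g.1 j :=
    Finset.sum_congr rfl fun j _ => mul_comm _ _
  simp only [Pi.neg_apply, neg_mul, mul_neg, Finset.sum_neg_distrib, h]
  ring

lemma mul_ginv (g : (Fin d → ℝ) × (Fin d → ℝ) × ℝ) : heisMul d g (ginv g) = (0, 0, 0) := by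
  simp only [heisMul, ginv, Prod.mk.injEq]
  refine ⟨by abel, by abel, ?_⟩
  have h : ∑ j, g.1 j * g.2.1 j = ∑ j, g.2.1 j * g.1 j :=
    Finset.sum_congr rfl fun j _ => mul_comm _ _
  simp only [Pi.neg_apply, neg_mul, mul_neg, Finset.sum_neg_distrib, h]
  ring

lemma T_add (g : (Fin d → ℝ) × (Fin d → ℝ) × ℝ) (ψ φ : Lp ℂ 2 μ) :
    T ℏ g (ψ + φ) = T ℏ g ψ + T ℏ g φ := by
  apply Lp.ext
  refine (coe_T ℏ g _).trans ?_
  refine .trans ?_ (((coe_T ℏ g ψ).add (coe_T ℏ g φ)).symm.trans (Lp.coeFn_add _ _).symm)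
  refine (Tf_congr ℏ g (Lp.coeFn_add ψ φ)).trans ?_
  refine Filter.Eventually.of_forall fun x => ?_
  simp only [Tf, Pi.add_apply]
  ring

lemma T_smul (g : (Fin d → ℝ) × (Fin d → ℝ) × ℝ) (c : ℂ) (ψ : Lp ℂ 2 μ) :
    T ℏ g (c • ψ) = c • T ℏ g ψ := by
  apply Lp.ext
  refine (coe_T ℏ g _).trans (.trans ?_ (Lp.coeFn_smul c (T ℏ g ψ)).symm)
  filter_upwards [Tf_congr ℏ g (Lp.coeFn_smul c ψ), coe_T ℏ g ψ] with x h1 h2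
  simp only [Tf, Pi.smul_apply, smul_eq_mul] at h1 h2 ⊢
  rw [h1, h2]
  ring

lemma T_norm (g : (Fin d → ℝ) × (Fin d → ℝ) × ℝ) (ψ : Lp ℂ 2 μ) :
    ‖T ℏ g ψ‖ = ‖ψ‖ := by
  rw [T, Lp.norm_toLp, Lp.norm_def]
  congr 1
  have h1 : eLpNorm (Tf ℏ g (ψ : (Fin d → ℝ) → ℂ)) 2 μ =
      eLpNorm (fun x => (ψ : (Fin d → ℝ) → ℂ) (x - g.1)) 2 μ := by
    apply eLpNorm_congr_norm_ae
    refine Filter.Eventually.of_forall fun x => ?_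
    simp only [Tf, norm_mul]
    rw [norm_ph, one_mul]
  rw [h1]
  exact eLpNorm_comp_measurePreserving (Lp.aestronglyMeasurable ψ)
    (measurePreserving_sub_right μ g.1)

/-- The Schrödinger representation operators as unitaries. -/
def rho (g : (Fin d → ℝ) × (Fin d → ℝ) × ℝ) : Lp ℂ 2 μ ≃ₗᵢ[ℂ] Lp ℂ 2 μ where
  toFun := T ℏ g
  invFun := T ℏ (ginv g)
  map_add' := T_add ℏ g
  map_smul' := T_smul ℏ g
  left_inv := fun ψ => by
    show T ℏ (ginv g) (T ℏ g ψ) = ψ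
    rw [T_comp, ginv_mul, T_id]
  right_inv := fun ψ => by
    show T ℏ g (T ℏ (ginv g) ψ) = ψ
    rw [T_comp, mul_ginv, T_id]
  norm_map' := T_norm ℏ g

end SchrodingerRep

/-- The Schrödinger representation of the Heisenberg group: there is a
family `ρ(q,p,λ)` of unitary operators (surjective linear isometries) of `L²(ℝ^d)` acting by
`(ρ(q,p,λ)ψ)(x) = e^{(i/ℏ)(λ + p·(x − q/2))} ψ(x − q)` and satisfying the Weyl relations
`ρ(g) ∘ ρ(g′) = ρ(g g′)` for the Heisenberg multiplication. -/
theorem schrodinger_representation (d : ℕ) (hd : 1 ≤ d) (ℏ : ℝ) (hℏ : 0 < ℏ) :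
    ∃ ρ : (Fin d → ℝ) × (Fin d → ℝ) × ℝ →
        (Lp ℂ 2 (volume : Measure (Fin d → ℝ)) ≃ₗᵢ[ℂ]
          Lp ℂ 2 (volume : Measure (Fin d → ℝ))),
      (∀ g ψ, (ρ g ψ : (Fin d → ℝ) → ℂ) =ᵐ[(volume : Measure (Fin d → ℝ))]
        fun x => Complex.exp ((Complex.I / (ℏ : ℂ)) *
          (((g.2.2 + ∑ j, g.2.1 j * (x j - g.1 j / 2) : ℝ)) : ℂ)) * ψ (x - g.1)) ∧
      (∀ g g', (ρ g').trans (ρ g) = ρ (heisMul d g g')) := by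
  refine ⟨SchrodingerRep.rho ℏ, fun g ψ => SchrodingerRep.coe_T ℏ g ψ, fun g g' => ?_⟩
  apply LinearIsometryEquiv.ext
  intro ψ
  exact SchrodingerRep.T_comp ℏ g g' ψ
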